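/- Let E_A(ε,w) = ε(w+ε)(w+2ε)/(w+3ε) − (w+2ε)²((w+2ε)⁴ + ε⁴)/(4((w+2ε)⁴ − ε⁴)) and E_B(ε,w) = ε(w+ε)²/(w+3ε) − (w+ε)²/(2(1 − ε⁴/(w+2ε)⁴)), and define the Peierls–Nabarro barrier ΔE_{AB}(ε, w_A) = E_A(ε, w_A) − E_B(ε, w_A/2). Then: (i) for every k > 0, ΔE_{AB}(k w_A, w_A) = −γ(k) w_A² where γ(k) > 0 does not depend on w_A; (ii) γ(k) → 1/8 as k → 0+ and inf_{k > 0} γ(k) > 0; consequently (iii) ΔE_{AB}(ε, w_A) < 0 for all ε, w_A > 0, there exists c > 0 with ΔE_{AB}(ε, w_A) ≤ −c w_A² for all ε, w_A > 0, and ΔE_{AB}(ε, w_A)/w_A² → −1/8 as ε/w_A → 0+. -/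

import Mathlib

open scoped BigOperators

noncomputable section

/-- Closed-form onsite energy `E_A(ε,w)`. -/
def EA (ε w : ℝ) : ℝ :=
  ε * (w + ε) * (w + 2 * ε) / (w + 3 * ε)
    - (w + 2 * ε) ^ 2 * ((w + 2 * ε) ^ 4 + ε ^ 4) / (4 * ((w + 2 * ε) ^ 4 - ε ^ 4))

/-- Closed-form offsite energy `E_B(ε,w)`. -/
def EB (ε w : ℝ) : ℝ :=
  ε * (w + ε) ^ 2 / (w + 3 * ε)
    - (w + ε) ^ 2 / (2 * (1 - ε ^ 4 / (w + 2 * ε) ^ 4))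

/-- The Peierls–Nabarro barrier `ΔE_{AB}(ε, w_A) = E_A(ε, w_A) − E_B(ε, w_A/2)`. -/
def ΔE (ε wA : ℝ) : ℝ := EA ε wA - EB ε (wA / 2)

def Npoly (k : ℝ) : ℝ :=
  (1 + 33*k + 478*k^2 + 4020*k^3 + 21851*k^4 + 80939*k^5 + 211146*k^6
    + 400804*k^7 + 581736*k^8 + 685856*k^9 + 655104*k^10 + 434304*k^11
    + 138240*k^12) / 32

def Dpoly (k : ℝ) : ℝ :=
  (1 + 33*k + 482*k^2 + 4104*k^3 + 22543*k^4 + 83367*k^5 + 209918*k^6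
    + 354816*k^7 + 384336*k^8 + 239760*k^9 + 64800*k^10) / 4

lemma pow4_sub_ne {a b : ℝ} (hb : 0 < b) (h : b < a) : a ^ 4 - b ^ 4 ≠ 0 :=
  ne_of_gt (sub_pos.mpr (pow_lt_pow_left₀ h hb.le (by norm_num)))

lemma EB_alt (ε w : ℝ) (hq : w + 2 * ε ≠ 0) (h : (w + 2 * ε) ^ 4 - ε ^ 4 ≠ 0) :
    EB ε w = ε * (w + ε) ^ 2 / (w + 3 * ε)
      - (w + ε) ^ 2 * (w + 2 * ε) ^ 4 / (2 * ((w + 2 * ε) ^ 4 - ε ^ 4)) := by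
  unfold EB
  have hq4 : (w + 2 * ε) ^ 4 ≠ 0 := pow_ne_zero _ hq
  have e : 1 - ε ^ 4 / (w + 2 * ε) ^ 4 = ((w + 2 * ε) ^ 4 - ε ^ 4) / (w + 2 * ε) ^ 4 := by
    rw [one_sub_div hq4]
  rw [e]
  congr 1
  rw [div_eq_div_iff (mul_ne_zero two_ne_zero (div_ne_zero h hq4)) (mul_ne_zero two_ne_zero h)]
  rw [mul_div_assoc', mul_div_assoc', eq_div_iff hq4]
  ring

lemma EA_scale (k wA : ℝ) (hk : 0 < k) (hw : 0 < wA) :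
    EA (k * wA) wA = wA ^ 2 * EA k 1 := by
  have h1 : wA + 3 * (k * wA) ≠ 0 := by positivity
  have h2 : (1 : ℝ) + 3 * k ≠ 0 := by positivity
  have h3 : (wA + 2 * (k * wA)) ^ 4 - (k * wA) ^ 4 ≠ 0 :=
    pow4_sub_ne (by positivity) (by nlinarith [mul_pos hk hw])
  have h4 : ((1 : ℝ) + 2 * k) ^ 4 - k ^ 4 ≠ 0 :=
    pow4_sub_ne hk (by linarith)
  unfold EA
  field_simp

lemma EB_hom (k s : ℝ) (hk : 0 < k) (hs : 0 < s) :
    EB (k * s) s = s ^ 2 * EB k 1 := by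
  have h1 : s + 3 * (k * s) ≠ 0 := by positivity
  have h2 : (1 : ℝ) + 3 * k ≠ 0 := by positivity
  have hq : (s + 2 * (k * s)) ≠ 0 := by positivity
  have hq' : ((1:ℝ) + 2 * k) ≠ 0 := by positivity
  have h3 : (s + 2 * (k * s)) ^ 4 - (k * s) ^ 4 ≠ 0 :=
    pow4_sub_ne (by positivity) (by nlinarith [mul_pos hk hs])
  have h4 : ((1:ℝ) + 2 * k) ^ 4 - k ^ 4 ≠ 0 :=
    pow4_sub_ne hk (by linarith)
  rw [EB_alt _ _ hq h3, EB_alt _ _ hq' h4]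
  field_simp

lemma EB_half (k : ℝ) (hk : 0 < k) :
    EB k (1 / 2) = (1 / 2 : ℝ) ^ 2 * EB (2 * k) 1 := by
  have := EB_hom (2 * k) (1 / 2) (by linarith) (by norm_num)
  rw [show (2 * k) * (1 / 2 : ℝ) = k by ring] at this
  exact this

lemma ΔE_one (k : ℝ) (hk : 0 < k) : ΔE k 1 = -(Npoly k / Dpoly k) := by
  have h1 : (1:ℝ) + 3 * k ≠ 0 := by positivity
  have h2 : ((1:ℝ) + 2 * k) ^ 4 - k ^ 4 ≠ 0 := pow4_sub_ne hk (by linarith)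
  have h3 : (1:ℝ) + 3 * (2 * k) ≠ 0 := by positivity
  have hq' : ((1:ℝ) + 2 * (2 * k)) ≠ 0 := by positivity
  have h4 : ((1:ℝ) + 2 * (2 * k)) ^ 4 - (2 * k) ^ 4 ≠ 0 :=
    pow4_sub_ne (by linarith) (by linarith)
  have hD : Dpoly k ≠ 0 := by unfold Dpoly; positivity
  unfold ΔE
  rw [EB_half k hk, EB_alt _ _ hq' h4]
  unfold EA Npoly Dpoly
  have h2' : (4:ℝ) * ((1 + 2 * k) ^ 4 - k ^ 4) ≠ 0 := mul_ne_zero four_ne_zero h2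
  have h4' : (2:ℝ) * ((1 + 2 * (2 * k)) ^ 4 - (2 * k) ^ 4) ≠ 0 := mul_ne_zero two_ne_zero h4
  have hD' : (1 + 33*k + 482*k^2 + 4104*k^3 + 22543*k^4 + 83367*k^5 + 209918*k^6
    + 354816*k^7 + 384336*k^8 + 239760*k^9 + 64800*k^10 : ℝ) ≠ 0 := by positivity
  rw [div_sub_div _ _ h1 h2', div_sub_div _ _ h3 h4', mul_div_assoc',
    div_sub_div _ _ (mul_ne_zero h1 h2') (mul_ne_zero h3 h4'), div_div_div_eq, neg_div',
    div_eq_div_iff (mul_ne_zero (mul_ne_zero h1 h2') (mul_ne_zero h3 h4')) (mul_ne_zero (by norm_num) hD')]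
  ring

lemma ΔE_scale (k wA : ℝ) (hk : 0 < k) (hw : 0 < wA) :
    ΔE (k * wA) wA = wA ^ 2 * ΔE k 1 := by
  have e1 : EB (k * wA) (wA / 2) = (wA / 2) ^ 2 * EB (2 * k) 1 := by
    have := EB_hom (2 * k) (wA / 2) (by linarith) (by positivity)
    rw [show (2 * k) * (wA / 2) = k * wA by ring] at this
    exact this
  unfold ΔE
  rw [e1, EA_scale k wA hk hw, EB_half k hk]
  ring

lemma Npoly_pos {k : ℝ} (hk : 0 < k) : 0 < Npoly k := by unfold Npoly; positivity
lemma Dpoly_pos {k : ℝ} (hk : 0 < k) : 0 < Dpoly k := by unfold Dpoly; positivity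

lemma gamma_lb {k : ℝ} (hk : 0 < k) : (1 : ℝ) / 10 ≤ Npoly k / Dpoly k := by
  rw [le_div_iff₀ (Dpoly_pos hk)]
  unfold Npoly Dpoly
  nlinarith [pow_pos hk 2, pow_pos hk 3, pow_pos hk 4, pow_pos hk 5, pow_pos hk 6,
    pow_pos hk 7, pow_pos hk 8, pow_pos hk 9, pow_pos hk 10, pow_pos hk 11, pow_pos hk 12, hk]


/-- Properties of the Peierls–Nabarro barrier for the DNLS: it equals `−γ(k) w_A²` along
rays `ε = k w_A` with `γ > 0`, `γ(k) → 1/8` as `k → 0+`, `inf_{k>0} γ(k) > 0`; consequently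
`ΔE_{AB} < 0` everywhere, `ΔE_{AB} ≤ −c w_A²`, and `ΔE_{AB}/w_A² → −1/8` as `ε/w_A → 0+`. -/
theorem pnb_dnls :
    ∃ γ : ℝ → ℝ,
      (∀ k : ℝ, 0 < k → 0 < γ k) ∧
      (∀ k : ℝ, 0 < k → ∀ wA : ℝ, 0 < wA → ΔE (k * wA) wA = -(γ k) * wA ^ 2) ∧
      Filter.Tendsto γ (nhdsWithin 0 (Set.Ioi 0)) (nhds (1 / 8)) ∧
      (∃ c : ℝ, 0 < c ∧ ∀ k : ℝ, 0 < k → c ≤ γ k) ∧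
      (∀ ε wA : ℝ, 0 < ε → 0 < wA → ΔE ε wA < 0) ∧
      (∃ c : ℝ, 0 < c ∧ ∀ ε wA : ℝ, 0 < ε → 0 < wA → ΔE ε wA ≤ -c * wA ^ 2) ∧
      (∀ η : ℝ, 0 < η → ∃ ρ₀ : ℝ, 0 < ρ₀ ∧
        ∀ ε wA : ℝ, 0 < ε → 0 < wA → ε / wA < ρ₀ →
          |ΔE ε wA / wA ^ 2 + 1 / 8| ≤ η) := by
  refine ⟨fun k => Npoly k / Dpoly k, ?_, ?_, ?_, ?_, ?_, ?_, ?_⟩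
  · intro k hk
    exact div_pos (Npoly_pos hk) (Dpoly_pos hk)
  · intro k hk wA hw
    rw [ΔE_scale k wA hk hw, ΔE_one k hk]
    ring
  · have hc : ContinuousAt (fun k => Npoly k / Dpoly k) 0 := by
      apply ContinuousAt.div
      · unfold Npoly; fun_prop
      · unfold Dpoly; fun_prop
      · norm_num [Dpoly]
    have ht := hc.continuousWithinAt (s := Set.Ioi 0) |>.tendsto
    have hval : Npoly 0 / Dpoly 0 = 1 / 8 := by norm_num [Npoly, Dpoly]
    simpa [hval] using ht
  · exact ⟨1 / 10, by norm_num, fun k hk => gamma_lb hk⟩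
  · intro ε wA hε hw
    have hk : 0 < ε / wA := div_pos hε hw
    have he : (ε / wA) * wA = ε := div_mul_cancel₀ ε (ne_of_gt hw)
    have := ΔE_scale (ε / wA) wA hk hw
    rw [he, ΔE_one _ hk] at this
    rw [this]
    have := div_pos (Npoly_pos hk) (Dpoly_pos hk)
    nlinarith [sq_nonneg wA, pow_pos hw 2]
  · refine ⟨1 / 10, by norm_num, fun ε wA hε hw => ?_⟩
    have hk : 0 < ε / wA := div_pos hε hw
    have he : (ε / wA) * wA = ε := div_mul_cancel₀ ε (ne_of_gt hw)
    have hs := ΔE_scale (ε / wA) wA hk hw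
    rw [he, ΔE_one _ hk] at hs
    rw [hs]
    have hlb := gamma_lb hk
    have : (0:ℝ) < wA ^ 2 := pow_pos hw 2
    nlinarith
  · intro η hη
    have hc : ContinuousAt (fun k => Npoly k / Dpoly k) 0 := by
      apply ContinuousAt.div
      · unfold Npoly; fun_prop
      · unfold Dpoly; fun_prop
      · norm_num [Dpoly]
    have ht : Filter.Tendsto (fun k => Npoly k / Dpoly k)
        (nhdsWithin 0 (Set.Ioi 0)) (nhds (1 / 8)) := by
      have := hc.continuousWithinAt (s := Set.Ioi 0) |>.tendsto
      have hval : Npoly 0 / Dpoly 0 = 1 / 8 := by norm_num [Npoly, Dpoly]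
      simpa [hval] using this
    obtain ⟨δ, hδ, hmem⟩ := Metric.tendsto_nhdsWithin_nhds.mp ht η hη
    refine ⟨δ, hδ, fun ε wA hε hw hρ => ?_⟩
    set k := ε / wA with hkdef
    have hk : 0 < k := div_pos hε hw
    have he : k * wA = ε := div_mul_cancel₀ ε (ne_of_gt hw)
    have hs := ΔE_scale k wA hk hw
    rw [he, ΔE_one _ hk] at hs
    have hw2 : (wA:ℝ) ^ 2 ≠ 0 := by positivity
    have hdiv : ΔE ε wA / wA ^ 2 = -(Npoly k / Dpoly k) := by
      rw [hs, mul_comm (wA ^ 2)]; exact mul_div_cancel_right₀ _ hw2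
    have hdist := hmem (show k ∈ Set.Ioi (0:ℝ) from hk)
      (by rw [Real.dist_eq, sub_zero, abs_of_pos hk]; exact hρ)
    rw [Real.dist_eq] at hdist
    rw [hdiv]
    have : -(Npoly k / Dpoly k) + 1 / 8 = -(Npoly k / Dpoly k - 1 / 8) := by ring
    rw [this, abs_neg]
    exact le_of_lt hdist
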